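/- The function T₁(x) := (x/(π − x))·cot(x/2) is strictly convex on (0, π), i.e., T₁''(x) > 0 for all x ∈ (0, π). -/

import Mathlib

open Real

private lemma nonneg_of_hasDerivAt {f f' : ℝ → ℝ} (hd : ∀ u, HasDerivAt f (f' u) u)
    (h0 : f 0 = 0) (hp : ∀ u, 0 ≤ u → 0 ≤ f' u) : ∀ u, 0 ≤ u → 0 ≤ f u := by
  intro u hu
  have hmono : MonotoneOn f (Set.Ici 0) := by
    apply monotoneOn_of_deriv_nonneg (convex_Ici 0)
      (fun x _ => (hd x).continuousAt.continuousWithinAt)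
      (fun x _ => (hd x).differentiableAt.differentiableWithinAt)
    intro x hx
    rw [interior_Ici] at hx
    rw [(hd x).deriv]
    exact hp x hx.le
  have := hmono Set.self_mem_Ici (Set.mem_Ici.2 hu) hu
  linarith [this, h0 ▸ this]

private lemma sin3 : ∀ u : ℝ, 0 ≤ u → u - u ^ 3 / 6 ≤ Real.sin u := by
  have hd : ∀ u : ℝ, HasDerivAt (fun u : ℝ => Real.sin u - (u - u ^ 3 / 6))
      (Real.cos u - (1 - u ^ 2 / 2)) u := by
    intro u
    have h2 : HasDerivAt (fun u : ℝ => u - u ^ 3 / 6) (1 - u ^ 2 / 2) u := by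
      have h3 := ((hasDerivAt_pow 3 u).div_const 6)
      have h4 := (hasDerivAt_id u).sub h3
      refine h4.congr_deriv (Eq.symm ?_)
      push_cast; ring
    exact (Real.hasDerivAt_sin u).sub h2
  have := nonneg_of_hasDerivAt hd (by simp) (fun u hu => by
    have := Real.one_sub_sq_div_two_le_cos (x := u); linarith)
  intro u hu; linarith [this u hu]

private lemma cos4 : ∀ u : ℝ, 0 ≤ u → Real.cos u ≤ 1 - u ^ 2 / 2 + u ^ 4 / 24 := by
  have hd : ∀ u : ℝ, HasDerivAt (fun u : ℝ => 1 - u ^ 2 / 2 + u ^ 4 / 24 - Real.cos u)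
      (Real.sin u - (u - u ^ 3 / 6)) u := by
    intro u
    have h2 : HasDerivAt (fun u : ℝ => 1 - u ^ 2 / 2 + u ^ 4 / 24) (-(u) + u ^ 3 / 6) u := by
      have h3 := ((hasDerivAt_pow 2 u).div_const 2)
      have h4 := ((hasDerivAt_pow 4 u).div_const 24)
      have h5 := (((hasDerivAt_const u (1:ℝ)).sub h3).add h4)
      refine h5.congr_deriv (Eq.symm ?_)
      push_cast; ring
    have := h2.sub (Real.hasDerivAt_cos u)
    refine this.congr_deriv (Eq.symm ?_); ring
  have := nonneg_of_hasDerivAt hd (by simp) (fun u hu => by linarith [sin3 u hu])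
  intro u hu; linarith [this u hu]

private lemma sin5 : ∀ u : ℝ, 0 ≤ u → Real.sin u ≤ u - u ^ 3 / 6 + u ^ 5 / 120 := by
  have hd : ∀ u : ℝ, HasDerivAt (fun u : ℝ => u - u ^ 3 / 6 + u ^ 5 / 120 - Real.sin u)
      (1 - u ^ 2 / 2 + u ^ 4 / 24 - Real.cos u) u := by
    intro u
    have h3 := ((hasDerivAt_pow 3 u).div_const 6)
    have h5 := ((hasDerivAt_pow 5 u).div_const 120)
    have h4 := (((hasDerivAt_id u).sub h3).add h5).sub (Real.hasDerivAt_sin u)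
    refine h4.congr_deriv (Eq.symm ?_)
    push_cast; ring
  have := nonneg_of_hasDerivAt hd (by simp) (fun u hu => by linarith [cos4 u hu])
  intro u hu; linarith [this u hu]

private lemma cos6 : ∀ u : ℝ, 0 ≤ u → 1 - u ^ 2 / 2 + u ^ 4 / 24 - u ^ 6 / 720 ≤ Real.cos u := by
  have hd : ∀ u : ℝ, HasDerivAt
      (fun u : ℝ => Real.cos u - (1 - u ^ 2 / 2 + u ^ 4 / 24 - u ^ 6 / 720))
      (u - u ^ 3 / 6 + u ^ 5 / 120 - Real.sin u) u := by
    intro u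
    have h2 := ((hasDerivAt_pow 2 u).div_const 2)
    have h4 := ((hasDerivAt_pow 4 u).div_const 24)
    have h6 := ((hasDerivAt_pow 6 u).div_const 720)
    have h := (Real.hasDerivAt_cos u).sub ((((hasDerivAt_const u (1:ℝ)).sub h2).add h4).sub h6)
    refine h.congr_deriv (Eq.symm ?_)
    push_cast; ring
  have := nonneg_of_hasDerivAt hd (by simp) (fun u hu => by linarith [sin5 u hu])
  intro u hu; linarith [this u hu]

private lemma sin7 : ∀ u : ℝ, 0 ≤ u →
    u - u ^ 3 / 6 + u ^ 5 / 120 - u ^ 7 / 5040 ≤ Real.sin u := by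
  have hd : ∀ u : ℝ, HasDerivAt
      (fun u : ℝ => Real.sin u - (u - u ^ 3 / 6 + u ^ 5 / 120 - u ^ 7 / 5040))
      (Real.cos u - (1 - u ^ 2 / 2 + u ^ 4 / 24 - u ^ 6 / 720)) u := by
    intro u
    have h3 := ((hasDerivAt_pow 3 u).div_const 6)
    have h5 := ((hasDerivAt_pow 5 u).div_const 120)
    have h7 := ((hasDerivAt_pow 7 u).div_const 5040)
    have h := (Real.hasDerivAt_sin u).sub ((((hasDerivAt_id u).sub h3).add h5).sub h7)
    refine h.congr_deriv (Eq.symm ?_)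
    push_cast; ring
  have := nonneg_of_hasDerivAt hd (by simp) (fun u hu => by linarith [cos6 u hu])
  intro u hu; linarith [this u hu]

private lemma poly1 (x : ℝ) (h0 : 0 < x) (h1 : x ≤ π - 2) :
    0 < x*(π-x)^2*(1-x^2/8) - 4*π*(x/2-x^3/48+x^5/3840)*(π/2-x+x^3/12) := by
  have hpu : π < 3.1415927 := lt_trans Real.pi_lt_d20 (by norm_num)
  have hp2 : π^2 < 9.8696045 := by nlinarith [Real.pi_lt_d20, Real.pi_gt_d2]
  have hx1 : x ≤ 1.1415927 := by linarith
  have hx2 : x^2 ≤ 1.3032346 := by nlinarith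
  have hx3 : (0:ℝ) < x^3 := by positivity
  have hkey : x*(π-x)^2*(1-x^2/8) - 4*π*(x/2-x^3/48+x^5/3840)*(π/2-x+x^3/12)
      = (x^3/2)*(2-π^2/6) - (x^5/8)*(1+π^2/240) + π*x^6*(92-x^2)/11520 := by ring
  rw [hkey]
  have h6 : 0 ≤ π*x^6*(92-x^2)/11520 := by
    have : (0:ℝ) ≤ 92 - x^2 := by nlinarith
    positivity
  have e1 : x^5 ≤ 1.3032346 * x^3 := by nlinarith [mul_le_mul_of_nonneg_left hx2 hx3.le]
  have c1 : (0:ℝ) < 1+π^2/240 := by positivity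
  have c2 : 1+π^2/240 ≤ 1.0411234 := by nlinarith
  have c3 : x^5/8 ≤ 1.3032346*x^3/8 := by linarith
  have c4 : x^5/8*(1+π^2/240) ≤ (1.3032346*x^3/8)*1.0411234 :=
    mul_le_mul c3 c2 c1.le (by positivity)
  have c5 : x^3/6*π^2 ≤ x^3/6*9.8696045 :=
    mul_le_mul_of_nonneg_left hp2.le (by positivity)
  nlinarith [c4, c5, h6, hx3]

private lemma poly2 (s : ℝ) (h0 : 0 < s) (h1 : s ≤ 1) :
    0 < π*(1/3+(3/10)*s^2-(3/28)*s^4+s^6/84-s^8/1890) - 2*s + s^3/3 := by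
  have hpl : (3.141592 : ℝ) < π := Real.pi_gt_d6
  have hA : (0:ℝ) ≤ 1/3+(3/10)*s^2-(3/28)*s^4+s^6/84-s^8/1890 := by
    nlinarith [pow_le_one₀ h0.le h1 (n:=4), pow_le_one₀ h0.le h1 (n:=8), sq_nonneg s, pow_nonneg h0.le 6]
  have hu : (0:ℝ) ≤ 1 - s := by linarith
  have key : 0 < (3.141592:ℝ)*(1/3+(3/10)*s^2-(3/28)*s^4+s^6/84-s^8/1890) - 2*s + s^3/3 := by
    nlinarith [mul_nonneg h0.le (pow_nonneg hu 4), mul_nonneg h0.le (pow_nonneg hu 5),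
      mul_nonneg h0.le (pow_nonneg hu 6), mul_nonneg h0.le (pow_nonneg hu 7),
      pow_nonneg hu 2, pow_nonneg hu 3, pow_nonneg hu 4, pow_nonneg hu 5,
      pow_nonneg hu 6, pow_nonneg hu 7, pow_nonneg hu 8, h0.le,
      mul_nonneg h0.le (pow_nonneg hu 2), mul_nonneg h0.le (pow_nonneg hu 3)]
  nlinarith [mul_le_mul_of_nonneg_right hpl.le hA]

private lemma keyN1 (x : ℝ) (h0 : 0 < x) (h1 : x ≤ π - 2) :
    0 < 4*π*Real.cos (x/2)*Real.sin (x/2)^2 - 2*π*(π-x)*Real.sin (x/2)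
      + x*(π-x)^2*Real.cos (x/2) := by
  have hpu : π < 3.15 := Real.pi_lt_d2
  have hpl : (3.14 : ℝ) < π := Real.pi_gt_d2
  set s := Real.sin (x/2) with hs
  set c := Real.cos (x/2) with hc
  have hx2 : 0 < x/2 := by linarith
  have hcb : 1 - (x/2)^2/2 ≤ c := Real.one_sub_sq_div_two_le_cos
  have hsu : s ≤ x/2 - (x/2)^3/6 + (x/2)^5/120 := sin5 (x/2) hx2.le
  have hsin2 : Real.sin x = 2*s*c := by
    have h := Real.sin_two_mul (x/2)
    have h2 : 2*(x/2) = x := by ring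
    rw [h2] at h
    rw [h, hs, hc]
  have hsc_low : x - x^3/6 ≤ 2*s*c := by
    have := sin3 x h0.le; linarith [hsin2 ▸ this]
  have hsc_up : 2*s*c ≤ x := by
    have := Real.sin_le h0.le; linarith [hsin2 ▸ this]
  have hbr0 : 0 ≤ (π-x)/2 - s*c := by linarith
  have hbrU : (π-x)/2 - s*c ≤ π/2 - x + x^3/12 := by linarith
  have hSu : 0 ≤ x/2 - x^3/48 + x^5/3840 := by nlinarith [pow_pos h0 3, pow_pos h0 5]
  have hsu' : s ≤ x/2 - x^3/48 + x^5/3840 := by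
    have : x/2 - (x/2)^3/6 + (x/2)^5/120 = x/2 - x^3/48 + x^5/3840 := by ring
    linarith [this ▸ hsu]
  have t1 : s*((π-x)/2 - s*c) ≤ (x/2 - x^3/48 + x^5/3840)*((π-x)/2 - s*c) :=
    mul_le_mul_of_nonneg_right hsu' hbr0
  have t2 : (x/2 - x^3/48 + x^5/3840)*((π-x)/2 - s*c)
      ≤ (x/2 - x^3/48 + x^5/3840)*(π/2 - x + x^3/12) :=
    mul_le_mul_of_nonneg_left hbrU hSu
  have t3 : 4*π*(s*((π-x)/2 - s*c)) ≤ 4*π*((x/2 - x^3/48 + x^5/3840)*(π/2 - x + x^3/12)) :=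
    mul_le_mul_of_nonneg_left (t1.trans t2) (by positivity)
  have hcc : x*(π-x)^2*(1-x^2/8) ≤ x*(π-x)^2*c := by
    have h8 : 1 - x^2/8 ≤ c := by
      have : 1 - (x/2)^2/2 = 1 - x^2/8 := by ring
      linarith [this ▸ hcb]
    exact mul_le_mul_of_nonneg_left h8 (by positivity)
  have hpoly := poly1 x h0 h1
  nlinarith [t3, hcc, hpoly]

private lemma keyN2' (σ : ℝ) (h0 : 0 < σ) (h1 : σ ≤ 1) :
    0 < 4*π*Real.sin σ*Real.cos σ^2 - 4*π*σ*Real.cos σ + 4*(π-2*σ)*σ^2*Real.sin σ := by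
  have hpl : (3.14 : ℝ) < π := Real.pi_gt_d2
  set S := Real.sin σ with hS
  set C := Real.cos σ with hC
  have hS0 : 0 < S := Real.sin_pos_of_pos_of_lt_pi h0 (by linarith)
  have hC0 : 0 ≤ C := Real.cos_nonneg_of_mem_Icc ⟨by linarith, by linarith⟩
  have hSl : σ - σ^3/6 ≤ S := sin3 σ h0.le
  have hCu : C ≤ 1 - σ^2/2 + σ^4/24 := cos4 σ h0.le
  have hsin2 : Real.sin (2*σ) = 2*S*C := by rw [Real.sin_two_mul, hS, hC]
  have h2up : 2*S*C ≤ 2*σ := by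
    have := Real.sin_le (by linarith : (0:ℝ) ≤ 2*σ); linarith [hsin2 ▸ this]
  have h2low : σ - (2/3)*σ^3 + (2/15)*σ^5 - (4/315)*σ^7 ≤ S*C := by
    have h := sin7 (2*σ) (by linarith)
    rw [hsin2] at h
    nlinarith [h]
  have hbr0 : 0 ≤ σ - S*C := by linarith
  have hbrU : σ - S*C ≤ (2/3)*σ^3 - (2/15)*σ^5 + (4/315)*σ^7 := by linarith
  have hCuNN : (0:ℝ) ≤ 1 - σ^2/2 + σ^4/24 := by nlinarith [sq_nonneg σ]
  have t1 : C*(σ - S*C) ≤ (1 - σ^2/2 + σ^4/24)*(σ - S*C) :=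
    mul_le_mul_of_nonneg_right hCu hbr0
  have t2 : (1 - σ^2/2 + σ^4/24)*(σ - S*C)
      ≤ (1 - σ^2/2 + σ^4/24)*((2/3)*σ^3 - (2/15)*σ^5 + (4/315)*σ^7) :=
    mul_le_mul_of_nonneg_left hbrU hCuNN
  have t3 : π*(C*(σ - S*C)) ≤ π*((1 - σ^2/2 + σ^4/24)*((2/3)*σ^3 - (2/15)*σ^5 + (4/315)*σ^7)) :=
    mul_le_mul_of_nonneg_left (t1.trans t2) Real.pi_pos.le
  have hSS : (π-2*σ)*σ^2*(σ - σ^3/6) ≤ (π-2*σ)*σ^2*S := by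
    apply mul_le_mul_of_nonneg_left hSl
    have : 0 < π - 2*σ := by linarith
    positivity
  have hpoly := poly2 σ h0 h1
  have hid : (π-2*σ)*σ^2*(σ - σ^3/6)
      - π*((1 - σ^2/2 + σ^4/24)*((2/3)*σ^3 - (2/15)*σ^5 + (4/315)*σ^7))
      = σ^3*(π*(1/3+(3/10)*σ^2-(3/28)*σ^4+σ^6/84-σ^8/1890) - 2*σ + σ^3/3) := by ring
  have hσ3 : 0 < σ^3 := by positivity
  nlinarith [t3, hSS, mul_pos hσ3 hpoly, hid]

private lemma keyN (x : ℝ) (h0 : 0 < x) (h1 : x < π) :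
    0 < 4*π*Real.cos (x/2)*Real.sin (x/2)^2 - 2*π*(π-x)*Real.sin (x/2)
      + x*(π-x)^2*Real.cos (x/2) := by
  rcases le_or_gt x (π - 2) with h | h
  · exact keyN1 x h0 h
  · have hσ0 : 0 < (π-x)/2 := by linarith
    have hσ1 : (π-x)/2 ≤ 1 := by linarith
    have hs' : Real.sin (x/2) = Real.cos ((π-x)/2) := by
      rw [show (π-x)/2 = π/2 - x/2 by ring, Real.cos_pi_div_two_sub]
    have hc' : Real.cos (x/2) = Real.sin ((π-x)/2) := by
      rw [show (π-x)/2 = π/2 - x/2 by ring, Real.sin_pi_div_two_sub]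
    rw [hs', hc']
    have hkey := keyN2' ((π-x)/2) hσ0 hσ1
    nlinarith [hkey]

noncomputable def E1 (x : ℝ) : ℝ :=
  (π * Real.sin x - x * (π - x)) / ((π - x) ^ 2 * (1 - Real.cos x))

lemma hasDeriv1 (x : ℝ) (hx : x ∈ Set.Ioo (0:ℝ) π) :
    HasDerivAt (fun x : ℝ => x / (π - x) * Real.cot (x / 2)) (E1 x) x := by
  obtain ⟨h0, h1⟩ := hx
  have hs : Real.sin (x/2) ≠ 0 :=
    ne_of_gt (Real.sin_pos_of_pos_of_lt_pi (by linarith) (by linarith [Real.pi_pos]))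
  have ht : π - x ≠ 0 := by intro h; linarith [sub_eq_zero.mp h]
  have h_half : HasDerivAt (fun y : ℝ => y / 2) (1/2 : ℝ) x := by
    simpa using (hasDerivAt_id x).div_const 2
  have hcos : HasDerivAt (fun y : ℝ => Real.cos (y/2)) (-Real.sin (x/2) * (1/2)) x :=
    HasDerivAt.comp (h₂ := Real.cos) x (Real.hasDerivAt_cos (x/2)) h_half
  have hsin : HasDerivAt (fun y : ℝ => Real.sin (y/2)) (Real.cos (x/2) * (1/2)) x :=
    HasDerivAt.comp (h₂ := Real.sin) x (Real.hasDerivAt_sin (x/2)) h_half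
  have hq : HasDerivAt (fun y : ℝ => Real.cos (y/2) / Real.sin (y/2))
      ((-Real.sin (x/2) * (1/2) * Real.sin (x/2) - Real.cos (x/2) * (Real.cos (x/2) * (1/2)))
        / Real.sin (x/2) ^ 2) x := hcos.div hsin hs
  have hg : HasDerivAt (fun y : ℝ => y / (π - y))
      ((1 * (π - x) - x * (0 - 1)) / (π - x) ^ 2) x :=
    (hasDerivAt_id x).div ((hasDerivAt_const x π).sub (hasDerivAt_id x)) ht
  have hf := hg.mul hq
  have hfun : (fun x : ℝ => x / (π - x) * Real.cot (x / 2))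
      = fun y : ℝ => y / (π - y) * (Real.cos (y/2) / Real.sin (y/2)) := by
    funext y; rw [Real.cot_eq_cos_div_sin]
  rw [hfun]
  refine hf.congr_deriv (Eq.symm ?_)
  have hsin2 : Real.sin x = 2 * Real.sin (x/2) * Real.cos (x/2) := by
    have h := Real.sin_two_mul (x/2); rw [show 2*(x/2) = x by ring] at h; rw [h]
  have hcos2 : Real.cos x = 1 - 2 * Real.sin (x/2) ^ 2 := by
    have h := Real.cos_two_mul (x/2); rw [show 2*(x/2) = x by ring] at h; rw [h]
    have := Real.sin_sq_add_cos_sq (x/2); linarith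
  rw [E1, hsin2, hcos2]
  have h2 : (1:ℝ) - (1 - 2 * Real.sin (x/2) ^ 2) = 2 * Real.sin (x/2) ^ 2 := by ring
  rw [h2]
  field_simp
  linear_combination (π*x - x^2) * Real.sin_sq_add_cos_sq (x/2)


lemma hasDeriv2 (x : ℝ) (hx : x ∈ Set.Ioo (0:ℝ) π) :
    HasDerivAt E1
      (((π * Real.cos x - (1 * (π - x) + x * (0 - 1))) * ((π - x) ^ 2 * (1 - Real.cos x))
        - (π * Real.sin x - x * (π - x))
          * ((2 * (π - x) ^ 1 * (0 - 1)) * (1 - Real.cos x) + (π - x) ^ 2 * (0 - -Real.sin x)))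
        / ((π - x) ^ 2 * (1 - Real.cos x)) ^ 2) x := by
  obtain ⟨h0, h1⟩ := hx
  have hs : 0 < Real.sin (x/2) :=
    Real.sin_pos_of_pos_of_lt_pi (by linarith) (by linarith [Real.pi_pos])
  have hcos2 : Real.cos x = 1 - 2 * Real.sin (x/2) ^ 2 := by
    have h := Real.cos_two_mul (x/2); rw [show 2*(x/2) = x by ring] at h; rw [h]
    have := Real.sin_sq_add_cos_sq (x/2); linarith
  have hcx : Real.cos x < 1 := by nlinarith [hs]
  have ht : π - x ≠ 0 := by intro h; linarith [sub_eq_zero.mp h]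
  have hD : (π - x) ^ 2 * (1 - Real.cos x) ≠ 0 := by
    apply mul_ne_zero (pow_ne_zero 2 ht)
    intro h; linarith [sub_eq_zero.mp h]
  have hNum : HasDerivAt (fun y : ℝ => π * Real.sin y - y * (π - y))
      (π * Real.cos x - (1 * (π - x) + x * (0 - 1))) x := by
    exact (((Real.hasDerivAt_sin x).const_mul π).sub
      ((hasDerivAt_id x).mul ((hasDerivAt_const x π).sub (hasDerivAt_id x))))
  have hDen : HasDerivAt (fun y : ℝ => (π - y) ^ 2 * (1 - Real.cos y))
      ((2 * (π - x) ^ 1 * (0 - 1)) * (1 - Real.cos x) + (π - x) ^ 2 * (0 - -Real.sin x)) x := by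
    have hp : HasDerivAt (fun y : ℝ => (π - y) ^ 2) (2 * (π - x) ^ 1 * (0 - 1)) x :=
      ((hasDerivAt_const x π).sub (hasDerivAt_id x)).pow 2
    have hc : HasDerivAt (fun y : ℝ => 1 - Real.cos y) (0 - -Real.sin x) x :=
      (hasDerivAt_const x (1:ℝ)).sub (Real.hasDerivAt_cos x)
    exact hp.mul hc
  exact hNum.div hDen hD

theorem stmt_5 :
    ∀ x ∈ Set.Ioo (0 : ℝ) π,
      0 < deriv (deriv (fun x : ℝ => x / (π - x) * Real.cot (x / 2))) x := by
  intro x hx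
  obtain ⟨h0, h1⟩ := hx
  have hev : deriv (fun x : ℝ => x / (π - x) * Real.cot (x / 2)) =ᶠ[nhds x] E1 := by
    filter_upwards [isOpen_Ioo.mem_nhds (Set.mem_Ioo.mpr ⟨h0, h1⟩)] with y hy
    exact (hasDeriv1 y hy).deriv
  rw [hev.deriv_eq, (hasDeriv2 x ⟨h0, h1⟩).deriv]
  have hs : 0 < Real.sin (x/2) :=
    Real.sin_pos_of_pos_of_lt_pi (by linarith) (by linarith [Real.pi_pos])
  have hcos2' : Real.cos x = 1 - 2 * Real.sin (x/2) ^ 2 := by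
    have h := Real.cos_two_mul (x/2); rw [show 2*(x/2) = x by ring] at h; rw [h]
    have := Real.sin_sq_add_cos_sq (x/2); linarith
  have hcx : Real.cos x < 1 := by nlinarith [hs]
  have ht : (0:ℝ) < π - x := by linarith
  apply div_pos
  · -- numerator positivity
    have hsin2 : Real.sin x = 2 * Real.sin (x/2) * Real.cos (x/2) := by
      have h := Real.sin_two_mul (x/2); rw [show 2*(x/2) = x by ring] at h; rw [h]
    have hcos2 : Real.cos x = 1 - 2 * Real.sin (x/2) ^ 2 := by
      have h := Real.cos_two_mul (x/2); rw [show 2*(x/2) = x by ring] at h; rw [h]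
      have := Real.sin_sq_add_cos_sq (x/2); linarith
    have hG : (π * Real.cos x - (1 * (π - x) + x * (0 - 1))) * ((π - x) ^ 2 * (1 - Real.cos x))
        - (π * Real.sin x - x * (π - x))
          * ((2 * (π - x) ^ 1 * (0 - 1)) * (1 - Real.cos x) + (π - x) ^ 2 * (0 - -Real.sin x))
        = 2 * (π - x) * Real.sin (x/2)
          * (4*π*Real.cos (x/2)*Real.sin (x/2)^2 - 2*π*(π-x)*Real.sin (x/2)
            + x*(π-x)^2*Real.cos (x/2)) := by
      rw [hsin2, hcos2]
      linear_combination (-4*π*Real.sin (x/2)^2*(π-x)^2) * Real.sin_sq_add_cos_sq (x/2)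
    rw [hG]
    exact mul_pos (mul_pos (by linarith) hs) (keyN x h0 h1)
  · apply pow_pos
    exact mul_pos (pow_pos ht 2) (by linarith)
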